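/- arXiv:2105.01053 — 8 statements merged into one kernel-verified Lean document; each statement's English description precedes it below -/
import Mathlib

section
/- Reciprocally convex combination lemma: Let n, N be positive natural numbers, let R : Fin N → Matrix (Fin n) (Fin n) ℝ be a family of positive definite real matrices, let α : Fin N → ℝ satisfy α i > 0 for all i and ∑ i, α i = 1, and let S : Fin N → Fin N → Matrix (Fin n) (Fin n) ℝ satisfy S i i = R i for all i, S j i = (S i j)ᵀ for all i, j, and for all i ≠ j the 2n × 2n block matrix Matrix.fromBlocks (R i) (S i j) ((S i j)ᵀ) (R j) is positive semidefinite. Then for every family of vectors ϑ : Fin N → (Fin n → ℝ), ∑ i, (1 / α i) * (ϑ i ⬝ᵥ (R i).mulVec (ϑ i)) ≥ ∑ i, ∑ j, ϑ i ⬝ᵥ (S i j).mulVec (ϑ j). -/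
open Matrix Finset

/-- Reciprocally convex combination lemma. -/
theorem reciprocally_convex_combination
    (n N : ℕ) (hn : 0 < n) (hN : 0 < N)
    (R : Fin N → Matrix (Fin n) (Fin n) ℝ) (hR : ∀ i, (R i).PosDef)
    (α : Fin N → ℝ) (hα : ∀ i, 0 < α i) (hαsum : ∑ i, α i = 1)
    (S : Fin N → Fin N → Matrix (Fin n) (Fin n) ℝ)
    (hSdiag : ∀ i, S i i = R i)
    (hSsym : ∀ i j, S j i = (S i j)ᵀ)
    (hSblock : ∀ i j, i ≠ j →
      (Matrix.fromBlocks (R i) (S i j) (S i j)ᵀ (R j)).PosSemidef)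
    (ϑ : Fin N → (Fin n → ℝ)) :
    ∑ i, (1 / α i) * (ϑ i ⬝ᵥ (R i).mulVec (ϑ i)) ≥
      ∑ i, ∑ j, ϑ i ⬝ᵥ (S i j).mulVec (ϑ j) := by
  set q : Fin N → ℝ := fun i => ϑ i ⬝ᵥ (R i).mulVec (ϑ i) with hq
  set t : Fin N → Fin N → ℝ := fun i j => ϑ i ⬝ᵥ (S i j).mulVec (ϑ j) with ht
  have htsymm : ∀ i j, t j i = t i j := by
    intro i j
    simp only [ht, hSsym i j]
    rw [Matrix.dotProduct_mulVec, Matrix.vecMul_transpose]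
    exact dotProduct_comm _ _
  have key : ∀ i j, t i j + t j i ≤ (α j / α i) * q i + (α i / α j) * q j := by
    intro i j
    rcases eq_or_ne i j with rfl | hij
    · have : t i i = q i := by simp [ht, hq, hSdiag i]
      rw [this]
      have : α i / α i = 1 := div_self (hα i).ne'
      rw [this]; ring_nf; rfl
    · have hpsd := (hSblock i j hij).dotProduct_mulVec_nonneg
      set c := Real.sqrt (α j / α i) with hc
      set d := Real.sqrt (α i / α j) with hd
      have hc2 : c * c = α j / α i := Real.mul_self_sqrt (le_of_lt (div_pos (hα j) (hα i)))
      have hd2 : d * d = α i / α j := Real.mul_self_sqrt (le_of_lt (div_pos (hα i) (hα j)))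
      have hcd : c * d = 1 := by
        rw [hc, hd, ← Real.sqrt_mul (le_of_lt (div_pos (hα j) (hα i)))]
        rw [div_mul_div_comm, mul_comm (α j), div_self (mul_pos (hα i) (hα j)).ne', Real.sqrt_one]
      have h0 := hpsd (Sum.elim (c • ϑ i) (-(d • ϑ j)))
      simp only [Matrix.fromBlocks_mulVec, sumElim_dotProduct_sumElim,
        Matrix.mulVec_neg, Matrix.mulVec_smul, dotProduct_add, star_trivial,
        dotProduct_neg, neg_dotProduct, dotProduct_smul,
        smul_dotProduct, smul_eq_mul, neg_neg, Sum.elim_comp_inl, Sum.elim_comp_inr] at h0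
      have hT : ϑ j ⬝ᵥ (S i j)ᵀ.mulVec (ϑ i) = ϑ i ⬝ᵥ (S i j).mulVec (ϑ j) := by
        rw [Matrix.dotProduct_mulVec, Matrix.vecMul_transpose]
        exact dotProduct_comm _ _
      have hT2 : t j i = t i j := htsymm i j
      rw [hT2]
      simp only [ht, hq]
      rw [hT, show c * (c * (ϑ i ⬝ᵥ R i *ᵥ ϑ i)) + -(d * (c * (ϑ i ⬝ᵥ S i j *ᵥ ϑ j))) +
          (c * -(d * (ϑ i ⬝ᵥ S i j *ᵥ ϑ j)) + -(d * -(d * (ϑ j ⬝ᵥ R j *ᵥ ϑ j)))) =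
          (c * c) * (ϑ i ⬝ᵥ R i *ᵥ ϑ i) - (c * d) * (ϑ i ⬝ᵥ S i j *ᵥ ϑ j)
            - (c * d) * (ϑ i ⬝ᵥ S i j *ᵥ ϑ j) + (d * d) * (ϑ j ⬝ᵥ R j *ᵥ ϑ j)
          from by ring, hc2, hd2, hcd] at h0
      linarith
  have hdiv : ∀ i, (1 / α i) * q i = ∑ j, (α j / α i) * q i := by
    intro i
    rw [← Finset.sum_mul, ← Finset.sum_div, hαsum]
  calc ∑ i, ∑ j, t i j
      = (1/2) * ∑ i, ∑ j, (t i j + t j i) := by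
        rw [Finset.sum_congr rfl (fun i _ => Finset.sum_add_distrib)]
        rw [Finset.sum_add_distrib, Finset.sum_comm (f := fun i j => t j i)]
        ring
    _ ≤ (1/2) * ∑ i, ∑ j, ((α j / α i) * q i + (α i / α j) * q j) := by
        apply mul_le_mul_of_nonneg_left ?_ (by norm_num)
        exact Finset.sum_le_sum fun i _ => Finset.sum_le_sum fun j _ => key i j
    _ = ∑ i, ∑ j, (α j / α i) * q i := by
        rw [Finset.sum_congr rfl (fun i _ => Finset.sum_add_distrib),
          Finset.sum_add_distrib, Finset.sum_comm (f := fun i j => (α i / α j) * q j)]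
        ring
    _ = ∑ i, (1 / α i) * q i := by
        exact Finset.sum_congr rfl fun i _ => (hdiv i).symm
end

section
/- Matrix Jensen inequality: Let R be an n × n real positive semidefinite matrix, let a < b be real numbers, and let f : ℝ → (Fin n → ℝ) be continuous on [a, b]. Then (∫_{a}^{b} f(s) ds) ⬝ᵥ R.mulVec (∫_{a}^{b} f(s) ds) ≤ (b − a) * ∫_{a}^{b} f(s) ⬝ᵥ R.mulVec (f(s)) ds. -/
open Matrix intervalIntegral
open MeasureTheory

lemma quad_convex (n : ℕ) (R : Matrix (Fin n) (Fin n) ℝ) (hR : R.PosSemidef) :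
    ConvexOn ℝ Set.univ (fun x : Fin n → ℝ => x ⬝ᵥ R.mulVec x) := by
  have hT : Rᵀ = R := (by simpa using hR.1 : R.IsSymm)
  refine ⟨convex_univ, ?_⟩
  intro x _ y _ p q hp hq hpq
  have hsym : x ⬝ᵥ R.mulVec y = y ⬝ᵥ R.mulVec x := by
    rw [Matrix.dotProduct_mulVec, ← Matrix.mulVec_transpose, hT, dotProduct_comm]
  have hkey : (0:ℝ) ≤ (x - y) ⬝ᵥ R.mulVec (x - y) := by
    have := hR.dotProduct_mulVec_nonneg (x - y); simpa using this
  simp only [smul_eq_mul]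
  have hx : (p • x + q • y) ⬝ᵥ R.mulVec (p • x + q • y)
      = p^2 * (x ⬝ᵥ R.mulVec x) + p*q*(x ⬝ᵥ R.mulVec y) + p*q*(y ⬝ᵥ R.mulVec x)
        + q^2 * (y ⬝ᵥ R.mulVec y) := by
    simp [Matrix.mulVec_add, Matrix.mulVec_smul, add_dotProduct, smul_dotProduct,
      dotProduct_add, dotProduct_smul, smul_eq_mul]
    ring
  have hexp : (x - y) ⬝ᵥ R.mulVec (x - y)
      = x ⬝ᵥ R.mulVec x - x ⬝ᵥ R.mulVec y - y ⬝ᵥ R.mulVec x + y ⬝ᵥ R.mulVec y := by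
    simp [Matrix.mulVec_sub, sub_dotProduct, dotProduct_sub]
    ring
  rw [hexp] at hkey
  rw [hx]
  have hq' : q = 1 - p := by linarith
  subst hq'
  nlinarith [mul_nonneg (mul_nonneg hp hq) hkey]

/-- Matrix Jensen inequality. -/
theorem matrix_jensen_inequality
    (n : ℕ) (R : Matrix (Fin n) (Fin n) ℝ) (hR : R.PosSemidef)
    (a b : ℝ) (hab : a < b)
    (f : ℝ → (Fin n → ℝ)) (hf : ContinuousOn f (Set.Icc a b)) :
    (∫ s in a..b, f s) ⬝ᵥ R.mulVec (∫ s in a..b, f s) ≤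
      (b - a) * ∫ s in a..b, (f s ⬝ᵥ R.mulVec (f s)) := by
  set g : (Fin n → ℝ) → ℝ := fun x => x ⬝ᵥ R.mulVec x with hgdef
  set μ : Measure ℝ := MeasureTheory.volume.restrict (Set.Ioc a b) with hμ
  have hμuniv : μ Set.univ = ENNReal.ofReal (b - a) := by
    simp [hμ, Real.volume_Ioc]
  haveI : IsFiniteMeasure μ := ⟨by rw [hμuniv]; exact ENNReal.ofReal_lt_top⟩
  haveI : NeZero μ := ⟨by
    intro h
    rw [h] at hμuniv
    simp [eq_comm, ENNReal.ofReal_eq_zero] at hμuniv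
    linarith⟩
  have hgc : Continuous g := by
    have : g = fun x => ∑ i, x i * (∑ j, R i j * x j) := by
      funext x; simp [hgdef, dotProduct, Matrix.mulVec, dotProduct]
    rw [this]
    exact continuous_finset_sum _ fun i _ => (continuous_apply i).mul
      (continuous_finset_sum _ fun j _ => continuous_const.mul (continuous_apply j))
  have hfi : Integrable f μ := by
    have := (hf.integrableOn_Icc (μ := MeasureTheory.volume))
    exact this.mono_set Set.Ioc_subset_Icc_self
  have hgi : Integrable (g ∘ f) μ := by
    have : ContinuousOn (g ∘ f) (Set.Icc a b) := hgc.comp_continuousOn hf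
    exact this.integrableOn_Icc.mono_set Set.Ioc_subset_Icc_self
  have hjensen := (quad_convex n R hR).map_average_le hgc.continuousOn isClosed_univ
    (Filter.Eventually.of_forall fun x => Set.mem_univ _) hfi hgi
  rw [average_eq, average_eq, measureReal_def, hμuniv, ENNReal.toReal_ofReal (by linarith)] at hjensen
  have hI : (∫ s in a..b, f s) = ∫ x, f x ∂μ := intervalIntegral.integral_of_le hab.le
  have hJ : (∫ s in a..b, (f s ⬝ᵥ R.mulVec (f s))) = ∫ x, g (f x) ∂μ :=
    intervalIntegral.integral_of_le hab.le
  rw [hI, hJ]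
  set I := ∫ x, f x ∂μ
  set J := ∫ x, g (f x) ∂μ
  have hpos : (0:ℝ) < b - a := by linarith
  have hscale : ((b - a)⁻¹ • I) ⬝ᵥ R *ᵥ ((b - a)⁻¹ • I)
      = (b - a)⁻¹ * ((b - a)⁻¹ * (I ⬝ᵥ R *ᵥ I)) := by
    simp only [Matrix.mulVec_smul, smul_dotProduct, dotProduct_smul, smul_eq_mul]
  rw [hscale, smul_eq_mul] at hjensen
  show g I ≤ (b - a) * J
  have h2 : (b - a)⁻¹ * g I ≤ J := by
    have := mul_le_mul_of_nonneg_left hjensen (le_of_lt hpos)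
    calc (b-a)⁻¹ * g I = (b - a) * ((b - a)⁻¹ * ((b - a)⁻¹ * g I)) := by
          field_simp
      _ ≤ (b - a) * ((b - a)⁻¹ * J) := this
      _ = J := by field_simp
  calc g I = (b - a) * ((b - a)⁻¹ * g I) := by field_simp
    _ ≤ (b - a) * J := mul_le_mul_of_nonneg_left h2 (le_of_lt hpos)
end

section
/- Split-interval Jensen bound: Let R be an n × n real positive semidefinite matrix, let ζ : ℝ → (Fin n → ℝ) be continuously differentiable, let t ∈ ℝ and let 0 < τ < τ̄. Set ϑ₁ = ζ(t) − ζ(t − τ) and ϑ₂ = ζ(t − τ) − ζ(t − τ̄). Then τ̄ * ∫_{t − τ̄}^{t} ζ'(s) ⬝ᵥ R.mulVec (ζ'(s)) ds ≥ (τ̄ / τ) * (ϑ₁ ⬝ᵥ R.mulVec ϑ₁) + (τ̄ / (τ̄ − τ)) * (ϑ₂ ⬝ᵥ R.mulVec ϑ₂). -/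
open Matrix intervalIntegral

lemma scalar_jensen (a b : ℝ) (hab : a < b) (h : ℝ → ℝ) (hc : Continuous h) :
    (∫ s in a..b, h s) ^ 2 ≤ (b - a) * ∫ s in a..b, (h s) ^ 2 := by
  set I := ∫ s in a..b, h s with hI
  set c : ℝ := I / (b - a) with hc'
  have hba : (0:ℝ) < b - a := by linarith
  have h1 : (0:ℝ) ≤ ∫ s in a..b, (h s - c) ^ 2 := by
    apply intervalIntegral.integral_nonneg hab.le
    intro u _; positivity
  have h2 : ∫ s in a..b, (h s - c) ^ 2
      = (∫ s in a..b, (h s) ^ 2) - 2 * c * I + c ^ 2 * (b - a) := by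
    have hint1 : IntervalIntegrable (fun s => (h s) ^ 2) MeasureTheory.volume a b :=
      (hc.pow 2).intervalIntegrable a b
    have hint2 : IntervalIntegrable (fun s => 2 * c * h s) MeasureTheory.volume a b :=
      ((continuous_const.mul hc)).intervalIntegrable a b
    have : ∀ s, (h s - c) ^ 2 = (h s) ^ 2 - 2 * c * h s + c ^ 2 := by intro s; ring
    simp only [this]
    rw [intervalIntegral.integral_add (hint1.sub hint2) (intervalIntegrable_const),
      intervalIntegral.integral_sub hint1 hint2, intervalIntegral.integral_const_mul,
      intervalIntegral.integral_const]
    simp [← hI]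
    ring
  rw [h2] at h1
  have hcI : c * (b - a) = I := by rw [hc', div_mul_cancel₀ _ hba.ne']
  nlinarith [sq_nonneg (I - c * (b-a))]

lemma vector_jensen (n : ℕ) (R : Matrix (Fin n) (Fin n) ℝ) (hR : R.PosSemidef)
    (ζ ζ' : ℝ → (Fin n → ℝ))
    (hζ : ∀ s : ℝ, HasDerivAt ζ (ζ' s) s) (hζ' : Continuous ζ')
    (a b : ℝ) (hab : a < b) :
    (ζ b - ζ a) ⬝ᵥ R.mulVec (ζ b - ζ a) ≤
      (b - a) * ∫ s in a..b, (ζ' s ⬝ᵥ R.mulVec (ζ' s)) := by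
  obtain ⟨S, hS⟩ : ∃ S : Matrix (Fin n) (Fin n) ℝ, R = Sᴴ * S := by
    open scoped MatrixOrder Matrix.Norms.L2Operator in
    exact CStarAlgebra.nonneg_iff_eq_star_mul_self.mp hR.nonneg
  have key : ∀ v : Fin n → ℝ, v ⬝ᵥ R.mulVec v = ∑ i, (S.mulVec v i) ^ 2 := by
    intro v
    rw [hS, ← Matrix.mulVec_mulVec, dotProduct_mulVec]
    have : Matrix.vecMul v Sᴴ = S.mulVec v := by
      rw [conjTranspose_eq_transpose_of_trivial, ← Matrix.mulVec_transpose, transpose_transpose]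
    rw [this]
    simp [dotProduct, sq]
  -- continuity of components
  have hcomp : ∀ i : Fin n, Continuous (fun s => ζ' s i) := fun i =>
    (continuous_apply i).comp hζ'
  have hgcont : ∀ i : Fin n, Continuous (fun s => S.mulVec (ζ' s) i) := by
    intro i
    simp only [Matrix.mulVec, dotProduct]
    exact continuous_finset_sum _ fun j _ => continuous_const.mul (hcomp j)
  -- fundamental theorem per component
  have hftc : ∀ j : Fin n, ∫ s in a..b, ζ' s j = ζ b j - ζ a j := by
    intro j
    exact intervalIntegral.integral_eq_sub_of_hasDerivAt
      (fun x _ => (hasDerivAt_pi.1 (hζ x)) j)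
      ((hcomp j).intervalIntegrable a b)
  have hSint : ∀ i : Fin n,
      ∫ s in a..b, S.mulVec (ζ' s) i = S.mulVec (ζ b - ζ a) i := by
    intro i
    simp only [Matrix.mulVec, dotProduct]
    rw [intervalIntegral.integral_finset_sum (f := fun j s => S i j * ζ' s j) (fun j _ =>
      ((continuous_const.mul (hcomp j)).intervalIntegrable a b))]
    congr 1
    ext j
    rw [intervalIntegral.integral_const_mul, hftc j]
    simp [mul_comm]
  calc (ζ b - ζ a) ⬝ᵥ R.mulVec (ζ b - ζ a)
      = ∑ i, (S.mulVec (ζ b - ζ a) i) ^ 2 := key _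
    _ = ∑ i, (∫ s in a..b, S.mulVec (ζ' s) i) ^ 2 := by
        simp only [hSint]
    _ ≤ ∑ i, (b - a) * ∫ s in a..b, (S.mulVec (ζ' s) i) ^ 2 := by
        apply Finset.sum_le_sum
        intro i _
        exact scalar_jensen a b hab _ (hgcont i)
    _ = (b - a) * ∫ s in a..b, (ζ' s ⬝ᵥ R.mulVec (ζ' s)) := by
        rw [← Finset.mul_sum]
        congr 1
        rw [← intervalIntegral.integral_finset_sum (f := fun i s => (S.mulVec (ζ' s) i) ^ 2) (fun i _ =>
          (((hgcont i).pow 2).intervalIntegrable a b))]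
        congr 1
        ext s
        exact (key (ζ' s)).symm

/-- Split-interval Jensen bound. -/
theorem split_interval_jensen_bound
    (n : ℕ) (R : Matrix (Fin n) (Fin n) ℝ) (hR : R.PosSemidef)
    (ζ ζ' : ℝ → (Fin n → ℝ))
    (hζ : ∀ s : ℝ, HasDerivAt ζ (ζ' s) s) (hζ' : Continuous ζ')
    (t τ τbar : ℝ) (hτ : 0 < τ) (hττ : τ < τbar) :
    τbar * ∫ s in (t - τbar)..t, (ζ' s ⬝ᵥ R.mulVec (ζ' s)) ≥
      (τbar / τ) * ((ζ t - ζ (t - τ)) ⬝ᵥ R.mulVec (ζ t - ζ (t - τ))) +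
        (τbar / (τbar - τ)) *
          ((ζ (t - τ) - ζ (t - τbar)) ⬝ᵥ R.mulVec (ζ (t - τ) - ζ (t - τbar))) := by
  have hτbar : 0 < τbar := hτ.trans hττ
  have hq : Continuous (fun s => ζ' s ⬝ᵥ R.mulVec (ζ' s)) := by
    have hcomp : ∀ i : Fin n, Continuous (fun s => ζ' s i) := fun i =>
      (continuous_apply i).comp hζ'
    simp only [dotProduct, Matrix.mulVec]
    apply continuous_finset_sum
    intro i _
    exact (hcomp i).mul (continuous_finset_sum _ fun j _ => continuous_const.mul (hcomp j))
  have h1 : (ζ t - ζ (t - τ)) ⬝ᵥ R.mulVec (ζ t - ζ (t - τ)) ≤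
      τ * ∫ s in (t - τ)..t, (ζ' s ⬝ᵥ R.mulVec (ζ' s)) := by
    have := vector_jensen n R hR ζ ζ' hζ hζ' (t - τ) t (by linarith)
    simpa using this
  have h2 : (ζ (t - τ) - ζ (t - τbar)) ⬝ᵥ R.mulVec (ζ (t - τ) - ζ (t - τbar)) ≤
      (τbar - τ) * ∫ s in (t - τbar)..(t - τ), (ζ' s ⬝ᵥ R.mulVec (ζ' s)) := by
    have := vector_jensen n R hR ζ ζ' hζ hζ' (t - τbar) (t - τ) (by linarith)
    simpa using this
  have hsplit : ∫ s in (t - τbar)..t, (ζ' s ⬝ᵥ R.mulVec (ζ' s)) =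
      (∫ s in (t - τbar)..(t - τ), (ζ' s ⬝ᵥ R.mulVec (ζ' s))) +
      (∫ s in (t - τ)..t, (ζ' s ⬝ᵥ R.mulVec (ζ' s))) :=
    (intervalIntegral.integral_add_adjacent_intervals
      (hq.intervalIntegrable _ _) (hq.intervalIntegrable _ _)).symm
  rw [ge_iff_le, hsplit]
  have e1 : (τbar / τ) * ((ζ t - ζ (t - τ)) ⬝ᵥ R.mulVec (ζ t - ζ (t - τ))) ≤
      τbar * ∫ s in (t - τ)..t, (ζ' s ⬝ᵥ R.mulVec (ζ' s)) := by
    have := mul_le_mul_of_nonneg_left h1 (le_of_lt (div_pos hτbar hτ))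
    calc (τbar / τ) * ((ζ t - ζ (t - τ)) ⬝ᵥ R.mulVec (ζ t - ζ (t - τ)))
        ≤ (τbar / τ) * (τ * ∫ s in (t - τ)..t, (ζ' s ⬝ᵥ R.mulVec (ζ' s))) := this
      _ = τbar * ∫ s in (t - τ)..t, (ζ' s ⬝ᵥ R.mulVec (ζ' s)) := by
          field_simp
  have e2 : (τbar / (τbar - τ)) *
        ((ζ (t - τ) - ζ (t - τbar)) ⬝ᵥ R.mulVec (ζ (t - τ) - ζ (t - τbar))) ≤
      τbar * ∫ s in (t - τbar)..(t - τ), (ζ' s ⬝ᵥ R.mulVec (ζ' s)) := by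
    have hpos : (0:ℝ) < τbar - τ := by linarith
    have := mul_le_mul_of_nonneg_left h2 (le_of_lt (div_pos hτbar hpos))
    calc (τbar / (τbar - τ)) *
          ((ζ (t - τ) - ζ (t - τbar)) ⬝ᵥ R.mulVec (ζ (t - τ) - ζ (t - τbar)))
        ≤ (τbar / (τbar - τ)) *
            ((τbar - τ) * ∫ s in (t - τbar)..(t - τ), (ζ' s ⬝ᵥ R.mulVec (ζ' s))) := this
      _ = τbar * ∫ s in (t - τbar)..(t - τ), (ζ' s ⬝ᵥ R.mulVec (ζ' s)) := by
          field_simp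
  rw [mul_add]
  linarith
end

section
/- Integral bound via a coupling matrix: Let R and S₁₂ be n × n real matrices with R positive semidefinite, and suppose the 2n × 2n block matrix Matrix.fromBlocks R S₁₂ S₁₂ᵀ R is positive semidefinite. Let ζ : ℝ → (Fin n → ℝ) be continuously differentiable, let t ∈ ℝ, let 0 ≤ τ ≤ τ̄ with τ̄ > 0, and set ϑ₁ = ζ(t) − ζ(t − τ), ϑ₂ = ζ(t − τ) − ζ(t − τ̄). Then τ̄ * ∫_{t − τ̄}^{t} ζ'(s) ⬝ᵥ R.mulVec (ζ'(s)) ds ≥ ϑ₁ ⬝ᵥ R.mulVec ϑ₁ + 2 * (ϑ₁ ⬝ᵥ S₁₂.mulVec ϑ₂) + ϑ₂ ⬝ᵥ R.mulVec ϑ₂. -/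
open Matrix intervalIntegral MeasureTheory

/-- Scalar Cauchy–Schwarz for interval integrals. -/
lemma cs_scalar_aux {g : ℝ → ℝ} (hg : Continuous g) {a b : ℝ} (hab : a ≤ b) :
    (∫ s in a..b, g s) ^ 2 ≤ (b - a) * ∫ s in a..b, (g s) ^ 2 := by
  rcases eq_or_lt_of_le hab with rfl | hlt
  · simp
  have hL : 0 < b - a := by linarith
  set I := ∫ s in a..b, g s with hI
  set J := ∫ s in a..b, (g s) ^ 2 with hJ
  set c : ℝ := I / (b - a) with hc
  have hint1 : IntervalIntegrable g volume a b := hg.intervalIntegrable a b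
  have hint2 : IntervalIntegrable (fun s => (g s) ^ 2) volume a b :=
    (hg.pow 2).intervalIntegrable a b
  have key : (0 : ℝ) ≤ ∫ s in a..b, (g s - c) ^ 2 :=
    intervalIntegral.integral_nonneg hab (fun x _ => sq_nonneg _)
  have hexp : (∫ s in a..b, (g s - c) ^ 2) = J - 2 * c * I + c ^ 2 * (b - a) := by
    have h1 : ∀ s, (g s - c) ^ 2 = (g s) ^ 2 - (2 * c) * g s + c ^ 2 := by intro s; ring
    simp_rw [h1]
    rw [intervalIntegral.integral_add (hint2.sub (hint1.const_mul (2 * c)))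
        intervalIntegrable_const,
      intervalIntegral.integral_sub hint2 (hint1.const_mul (2 * c)),
      intervalIntegral.integral_const_mul, intervalIntegral.integral_const]
    simp only [smul_eq_mul]
    ring
  rw [hexp] at key
  have hcI : c * (b - a) = I := div_mul_cancel₀ _ (ne_of_gt hL)
  nlinarith [mul_nonneg hL.le key, sq_nonneg (c * (b - a) - I)]

open scoped MatrixOrder in
/-- Vector Jensen inequality for the quadratic form of a PSD matrix. -/
lemma jensen_vec_aux {n : ℕ} {R : Matrix (Fin n) (Fin n) ℝ} (hR : R.PosSemidef)
    {f : ℝ → Fin n → ℝ} (hf : Continuous f) {a b : ℝ} (hab : a ≤ b) :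
    (∫ s in a..b, f s) ⬝ᵥ R.mulVec (∫ s in a..b, f s) ≤
      (b - a) * ∫ s in a..b, f s ⬝ᵥ R.mulVec (f s) := by
  classical
  set C := CFC.sqrt R with hCdef
  have hCC : C * C = R := CFC.sqrt_mul_sqrt_self R hR.nonneg
  have hCh : Cᵀ = C := by
    have := (CFC.sqrt_nonneg R).posSemidef.1
    simpa [Matrix.IsHermitian, Matrix.conjTranspose_eq_transpose_of_trivial] using this
  have hquad : ∀ v : Fin n → ℝ, v ⬝ᵥ R.mulVec v = (C.mulVec v) ⬝ᵥ (C.mulVec v) := by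
    intro v
    rw [← hCC, ← Matrix.mulVec_mulVec, Matrix.dotProduct_mulVec]
    congr 1
    conv_lhs => rw [← hCh, Matrix.vecMul_transpose]
  -- the continuous linear map given by C
  let L : (Fin n → ℝ) →L[ℝ] (Fin n → ℝ) := LinearMap.toContinuousLinearMap C.mulVecLin
  have hLapp : ∀ v, L v = C.mulVec v := fun v => rfl
  set g : ℝ → Fin n → ℝ := fun s => C.mulVec (f s) with hg
  have hgc : Continuous g := L.continuous.comp hf
  have hfint : IntervalIntegrable f volume a b := hf.intervalIntegrable a b
  have hint_g : C.mulVec (∫ s in a..b, f s) = ∫ s in a..b, g s := by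
    rw [← hLapp]
    rw [← L.intervalIntegral_comp_comm hfint]
    rfl
  have happly : ∀ i, (∫ s in a..b, g s) i = ∫ s in a..b, g s i := by
    intro i
    exact ((ContinuousLinearMap.proj i : (Fin n → ℝ) →L[ℝ] ℝ).intervalIntegral_comp_comm
      (hgc.intervalIntegrable a b)).symm
  have hgi : ∀ i, Continuous fun s => g s i := fun i => (continuous_apply i).comp hgc
  calc (∫ s in a..b, f s) ⬝ᵥ R.mulVec (∫ s in a..b, f s)
      = ∑ i, ((∫ s in a..b, g s) i) ^ 2 := by
        rw [hquad, hint_g, dotProduct]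
        exact Finset.sum_congr rfl (fun i _ => (sq _).symm)
    _ = ∑ i, (∫ s in a..b, g s i) ^ 2 := by simp_rw [happly]
    _ ≤ ∑ i, ((b - a) * ∫ s in a..b, (g s i) ^ 2) :=
        Finset.sum_le_sum fun i _ => cs_scalar_aux (hgi i) hab
    _ = (b - a) * ∑ i, ∫ s in a..b, (g s i) ^ 2 := by rw [Finset.mul_sum]
    _ = (b - a) * ∫ s in a..b, ∑ i, (g s i) ^ 2 := by
        rw [intervalIntegral.integral_finset_sum]
        intro i _
        exact ((hgi i).pow 2).intervalIntegrable a b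
    _ = (b - a) * ∫ s in a..b, f s ⬝ᵥ R.mulVec (f s) := by
        congr 1
        refine intervalIntegral.integral_congr fun s _ => ?_
        rw [hquad, dotProduct]
        exact Finset.sum_congr rfl (fun i _ => (sq _))

/-- Cross-term bound from the positive semidefinite block matrix. -/
lemma cross_bound_aux {n : ℕ} {R S : Matrix (Fin n) (Fin n) ℝ}
    (hblock : (Matrix.fromBlocks R S Sᵀ R).PosSemidef) (u v : Fin n → ℝ) :
    2 * (u ⬝ᵥ S.mulVec v) ≤ u ⬝ᵥ R.mulVec u + v ⬝ᵥ R.mulVec v := by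
  have h := hblock.dotProduct_mulVec_nonneg (Sum.elim u (-v))
  simp only [star_trivial, Matrix.fromBlocks_mulVec, sumElim_dotProduct_sumElim,
    Sum.elim_comp_inl, Sum.elim_comp_inr, Matrix.mulVec_neg, dotProduct_add,
    dotProduct_neg, neg_dotProduct, neg_neg] at h
  have hst : v ⬝ᵥ Sᵀ.mulVec u = u ⬝ᵥ S.mulVec v := by
    rw [Matrix.dotProduct_mulVec, Matrix.vecMul_transpose, dotProduct_comm]
  linarith [h, hst]

/-- Integral bound via a coupling matrix. -/
theorem integral_bound_via_coupling_matrix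
    (n : ℕ) (R S₁₂ : Matrix (Fin n) (Fin n) ℝ) (hR : R.PosSemidef)
    (hblock : (Matrix.fromBlocks R S₁₂ S₁₂ᵀ R).PosSemidef)
    (ζ ζ' : ℝ → (Fin n → ℝ))
    (hζ : ∀ s : ℝ, HasDerivAt ζ (ζ' s) s) (hζ' : Continuous ζ')
    (t τ τbar : ℝ) (hτ0 : 0 ≤ τ) (hττ : τ ≤ τbar) (hτbar : 0 < τbar) :
    τbar * ∫ s in (t - τbar)..t, (ζ' s ⬝ᵥ R.mulVec (ζ' s)) ≥
      (ζ t - ζ (t - τ)) ⬝ᵥ R.mulVec (ζ t - ζ (t - τ)) +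
        2 * ((ζ t - ζ (t - τ)) ⬝ᵥ S₁₂.mulVec (ζ (t - τ) - ζ (t - τbar))) +
        (ζ (t - τ) - ζ (t - τbar)) ⬝ᵥ R.mulVec (ζ (t - τ) - ζ (t - τbar)) := by
  classical
  set x := ζ t - ζ (t - τ) with hx
  set y := ζ (t - τ) - ζ (t - τbar) with hy
  have hftc : ∀ a b : ℝ, (∫ s in a..b, ζ' s) = ζ b - ζ a := fun a b =>
    intervalIntegral.integral_eq_sub_of_hasDerivAt (fun s _ => hζ s)
      (hζ'.intervalIntegrable a b)
  set Q : ℝ → ℝ := fun s => ζ' s ⬝ᵥ R.mulVec (ζ' s) with hQ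
  have hQc : Continuous Q := by
    simp only [hQ, dotProduct, Matrix.mulVec]
    refine continuous_finset_sum _ fun i _ => ?_
    exact ((continuous_apply i).comp hζ').mul
      (continuous_finset_sum _ fun j _ =>
        continuous_const.mul ((continuous_apply j).comp hζ'))
  have hQnn : ∀ s, 0 ≤ Q s := by
    intro s
    simpa [star_trivial] using hR.dotProduct_mulVec_nonneg (ζ' s)
  -- Jensen over a subinterval
  have jensen : ∀ a b : ℝ, a ≤ b →
      (ζ b - ζ a) ⬝ᵥ R.mulVec (ζ b - ζ a) ≤ (b - a) * ∫ s in a..b, Q s := by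
    intro a b hab
    have := jensen_vec_aux hR hζ' hab
    rwa [hftc a b] at this
  -- degenerate cases
  rcases eq_or_lt_of_le hτ0 with h0 | h0
  · -- τ = 0
    have hx0 : x = 0 := by simp [hx, ← h0]
    have hy' : y = ζ t - ζ (t - τbar) := by simp [hy, ← h0]
    have hJ := jensen (t - τbar) t (by linarith)
    simp only [sub_sub_cancel] at hJ
    simp only [hx0, hy', zero_dotProduct, ge_iff_le]
    linarith [hJ]
  rcases eq_or_lt_of_le hττ with h1 | h1
  · -- τ = τbar
    have hy0 : y = 0 := by simp [hy, h1]
    have hx' : x = ζ t - ζ (t - τbar) := by simp [hx, h1]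
    have hJ := jensen (t - τbar) t (by linarith)
    simp only [sub_sub_cancel] at hJ
    simp only [hy0, dotProduct_zero, Matrix.mulVec_zero, hx', ge_iff_le]
    linarith [hJ]
  -- main case : 0 < τ < τbar
  set a := τ with ha
  set b := τbar - τ with hb
  have hbpos : 0 < b := sub_pos.mpr h1
  have hsplit : (∫ s in (t - τbar)..t, Q s) =
      (∫ s in (t - τbar)..(t - τ), Q s) + ∫ s in (t - τ)..t, Q s :=
    (intervalIntegral.integral_add_adjacent_intervals
      (hQc.intervalIntegrable _ _) (hQc.intervalIntegrable _ _)).symm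
  set I₁ : ℝ := ∫ s in (t - τ)..t, Q s with hI₁
  set I₂ : ℝ := ∫ s in (t - τbar)..(t - τ), Q s with hI₂
  have hJ1 : x ⬝ᵥ R.mulVec x ≤ a * I₁ := by
    have := jensen (t - τ) t (by linarith)
    simpa [sub_sub_cancel, hx, hI₁] using this
  have hJ2 : y ⬝ᵥ R.mulVec y ≤ b * I₂ := by
    have := jensen (t - τbar) (t - τ) (by linarith)
    have harith : t - τ - (t - τbar) = b := by rw [hb]; ring
    rwa [harith, ← hy, ← hI₂] at this
  have hs := cross_bound_aux hblock (b • x) (a • y)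
  simp only [smul_dotProduct, Matrix.mulVec_smul, dotProduct_smul,
    smul_eq_mul] at hs
  -- hs : 2 * (b * (a * (x ⬝ᵥ S₁₂ *ᵥ y))) ≤ b * (b * xRx) + a * (a * yRy)
  rw [hsplit, ge_iff_le]
  have hτb : τbar = a + b := by rw [ha, hb]; ring
  rw [hτb]
  nlinarith [mul_le_mul_of_nonneg_left hJ1 (by positivity : (0:ℝ) ≤ b * (a + b)),
    mul_le_mul_of_nonneg_left hJ2 (by positivity : (0:ℝ) ≤ a * (a + b)),
    hs, mul_pos h0 hbpos]
end

section
/- Polynomial bound on the matrix exponential for a spectrum in the closed left half-plane: Let A be an n × n real matrix such that every complex root λ of its characteristic polynomial (equivalently, every eigenvalue of A viewed as a complex matrix) satisfies Re λ ≤ 0. Then there exists a real polynomial Γ such that ‖Matrix.exp(t • A)‖ ≤ Γ(t) for all t ≥ 0. -/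
open Matrix Polynomial

attribute [local instance] Matrix.frobeniusNormedAddCommGroup Matrix.frobeniusNormedRing

attribute [local instance] Matrix.frobeniusNormedAlgebra Matrix.frobeniusNormedSpace
  Matrix.frobeniusIsBoundedSMul

private theorem aux_matrix_complete {m : Type*} [Fintype m] {α : Type*} [NormedAddCommGroup α]
    [NormedSpace ℝ α] [FiniteDimensional ℝ α] : CompleteSpace (Matrix m m α) :=
  FiniteDimensional.complete ℝ _

attribute [local instance] aux_matrix_complete

private theorem aux_eval_mono {p : Polynomial ℝ} (hp : ∀ k, 0 ≤ p.coeff k) {s t : ℝ}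
    (hs : 0 ≤ s) (hst : s ≤ t) : p.eval s ≤ p.eval t := by
  rw [Polynomial.eval_eq_sum_range, Polynomial.eval_eq_sum_range]
  refine Finset.sum_le_sum fun i _ => ?_
  exact mul_le_mul_of_nonneg_left (pow_le_pow_left₀ hs hst i) (hp i)

private theorem aux_key (n : ℕ) (B : Matrix (Fin n) (Fin n) ℂ) (r : List ℂ) :
    (∀ μ ∈ r, μ.re ≤ 0) →
    ∀ P : Matrix (Fin n) (Fin n) ℂ,
      (r.map (fun μ => B - μ • 1)).prod * P = 0 →
      ∃ Γ : Polynomial ℝ, (∀ k, 0 ≤ Γ.coeff k) ∧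
        ∀ t : ℝ, 0 ≤ t → ‖NormedSpace.exp (t • B) * P‖ ≤ Γ.eval t := by
  induction r with
  | nil =>
    intro _ P hP
    rw [List.map_nil, List.prod_nil, one_mul] at hP
    exact ⟨0, by simp, by simp [hP]⟩
  | cons μ s ih =>
    intro hr P hP
    have hμ : μ.re ≤ 0 := hr μ (List.mem_cons_self)
    have hs : ∀ ν ∈ s, ν.re ≤ 0 := fun ν hν => hr ν (List.mem_cons_of_mem _ hν)
    set Q := (s.map fun ν => B - ν • 1).prod with hQ
    have hcomm : Commute (B - μ • 1) Q := by
      refine Commute.list_prod_right _ _ fun x hx => ?_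
      obtain ⟨ν, -, rfl⟩ := List.mem_map.mp hx
      have h1 : Commute B ((ν : ℂ) • (1 : Matrix (Fin n) (Fin n) ℂ)) :=
        (Commute.one_right B).smul_right ν
      have h2 : Commute ((μ : ℂ) • (1 : Matrix (Fin n) (Fin n) ℂ)) B :=
        (Commute.one_left B).smul_left μ
      have h3 : Commute ((μ : ℂ) • (1 : Matrix (Fin n) (Fin n) ℂ))
          ((ν : ℂ) • (1 : Matrix (Fin n) (Fin n) ℂ)) :=
        ((Commute.one_left (1 : Matrix (Fin n) (Fin n) ℂ)).smul_right ν).smul_left μ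
      exact ((Commute.refl B).sub_right h1).sub_left (h2.sub_right h3)
    have hP0 : (B - μ • 1) * (Q * P) = 0 := by
      simpa [mul_assoc] using hP
    have hP' : (s.map fun ν => B - ν • 1).prod * ((B - μ • 1) * P) = 0 := by
      rw [← hQ, ← mul_assoc, ← hcomm.eq, mul_assoc]
      exact hP0
    obtain ⟨Γ', hΓ'c, hΓ'⟩ := ih hs ((B - μ • 1) * P) hP'
    refine ⟨Polynomial.C ‖P‖ + Polynomial.X * Γ', ?_, ?_⟩
    · intro k
      cases k with
      | zero => simp [Polynomial.mul_coeff_zero, norm_nonneg]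
      | succ k => simpa [Polynomial.coeff_X_mul] using hΓ'c k
    · intro t ht
      set P' := (B - μ • 1) * P with hP'def
      set F : ℝ → Matrix (Fin n) (Fin n) ℂ :=
        fun s => Complex.exp (μ * ((t : ℂ) - (s : ℂ))) • (NormedSpace.exp (s • B) * P) with hF
      have hderiv : ∀ s : ℝ,
          HasDerivAt F (Complex.exp (μ * ((t : ℂ) - (s : ℂ))) •
            (NormedSpace.exp (s • B) * P')) s := by
        intro s
        have h0 : HasDerivAt (fun s : ℝ => ((s : ℂ))) 1 s := by
          simpa using (hasDerivAt_id s).ofReal_comp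
        have h1 : HasDerivAt (fun s : ℝ => μ * ((t : ℂ) - (s : ℂ))) (-μ) s := by
          simpa using ((hasDerivAt_const s (t : ℂ)).sub h0).const_mul μ
        have hc : HasDerivAt (fun s : ℝ => Complex.exp (μ * ((t : ℂ) - (s : ℂ))))
            (Complex.exp (μ * ((t : ℂ) - (s : ℂ))) * (-μ)) s := h1.cexp
        have hm : HasDerivAt (fun s : ℝ => NormedSpace.exp (s • B) * P)
            (NormedSpace.exp (s • B) * B * P) s :=
          (hasDerivAt_exp_smul_const B s).mul_const P
        have hsm := hc.smul hm
        convert hsm using 1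
        case e'_4 => rfl
        case e'_5 => rfl
        case e'_6 => rfl
        case e'_8 => rfl
        have hexpand : NormedSpace.exp (s • B) * P' =
            NormedSpace.exp (s • B) * B * P - μ • (NormedSpace.exp (s • B) * P) := by
          rw [hP'def, sub_mul, smul_mul_assoc, one_mul, mul_sub, mul_smul_comm, mul_assoc]
        rw [hexpand]
        module
      have hbound : ∀ s ∈ Set.Icc (0 : ℝ) t,
          ‖Complex.exp (μ * ((t : ℂ) - (s : ℂ))) • (NormedSpace.exp (s • B) * P')‖ ≤
            Γ'.eval t := by
        intro s hsIcc
        rw [norm_smul]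
        have habs : ‖Complex.exp (μ * ((t : ℂ) - (s : ℂ)))‖ ≤ 1 := by
          have h2 : ((t : ℂ) - (s : ℂ)) = ((t - s : ℝ) : ℂ) := by push_cast; ring
          rw [h2, Complex.norm_exp, Real.exp_le_one_iff]
          have h3 : (μ * ((t - s : ℝ) : ℂ)).re = μ.re * (t - s) := by
            simp [Complex.mul_re]
          rw [h3]
          exact mul_nonpos_of_nonpos_of_nonneg hμ (by linarith [hsIcc.2])
        calc ‖Complex.exp (μ * ((t : ℂ) - (s : ℂ)))‖ * ‖NormedSpace.exp (s • B) * P'‖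
            ≤ 1 * ‖NormedSpace.exp (s • B) * P'‖ :=
              mul_le_mul_of_nonneg_right habs (norm_nonneg _)
          _ = ‖NormedSpace.exp (s • B) * P'‖ := one_mul _
          _ ≤ Γ'.eval s := hΓ' s hsIcc.1
          _ ≤ Γ'.eval t := aux_eval_mono hΓ'c hsIcc.1 hsIcc.2
      have hmvt : ‖F t - F 0‖ ≤ Γ'.eval t * ‖t - 0‖ :=
        Convex.norm_image_sub_le_of_norm_hasDerivWithin_le
          (fun s _ => (hderiv s).hasDerivWithinAt) hbound (convex_Icc 0 t)
          (Set.left_mem_Icc.mpr ht) (Set.right_mem_Icc.mpr ht)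
      have hFt : F t = NormedSpace.exp (t • B) * P := by
        simp [hF]
      have hF0 : ‖F 0‖ ≤ ‖P‖ := by
        have h4 : F 0 = Complex.exp (μ * (t : ℂ)) • P := by
          simp [hF, NormedSpace.exp_zero]
        rw [h4, norm_smul, Complex.norm_exp]
        have h5 : (μ * (t : ℂ)).re = μ.re * t := by simp [Complex.mul_re]
        rw [h5]
        have h6 : Real.exp (μ.re * t) ≤ 1 :=
          Real.exp_le_one_iff.mpr (mul_nonpos_of_nonpos_of_nonneg hμ ht)
        calc Real.exp (μ.re * t) * ‖P‖ ≤ 1 * ‖P‖ :=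
              mul_le_mul_of_nonneg_right h6 (norm_nonneg _)
          _ = ‖P‖ := one_mul _
      have hgoal : Polynomial.eval t (Polynomial.C ‖P‖ + Polynomial.X * Γ') =
          ‖P‖ + t * Γ'.eval t := by simp
      rw [hgoal]
      calc ‖NormedSpace.exp (t • B) * P‖ = ‖F t - F 0 + F 0‖ := by rw [sub_add_cancel, hFt]
        _ ≤ ‖F t - F 0‖ + ‖F 0‖ := norm_add_le _ _
        _ ≤ Γ'.eval t * ‖t - 0‖ + ‖P‖ := add_le_add hmvt hF0
        _ = ‖P‖ + t * Γ'.eval t := by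
            rw [sub_zero, Real.norm_of_nonneg ht]; ring

/-- Polynomial bound on the matrix exponential when the spectrum lies in the
closed left half-plane. -/
theorem matrix_exp_poly_bound_of_spectrum_re_nonpos
    (n : ℕ) (A : Matrix (Fin n) (Fin n) ℝ)
    (hA : ∀ lam : ℂ, (A.charpoly.map (algebraMap ℝ ℂ)).IsRoot lam → lam.re ≤ 0) :
    ∃ Γ : Polynomial ℝ, ∀ t : ℝ, 0 ≤ t →
      ‖NormedSpace.exp (t • A)‖ ≤ Γ.eval t := by
  classical
  set f := (Complex.ofRealAm.mapMatrix : Matrix (Fin n) (Fin n) ℝ →ₐ[ℝ] Matrix (Fin n) (Fin n) ℂ)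
    with hfdef
  set B := A.map (algebraMap ℝ ℂ) with hBdef
  have hfA : f A = B := by
    ext i j
    simp [hfdef, hBdef]
  have hcont : Continuous f := f.toLinearMap.continuous_of_finiteDimensional
  have hcp : B.charpoly = A.charpoly.map (algebraMap ℝ ℂ) :=
    Matrix.charpoly_map A (algebraMap ℝ ℂ)
  have hroots : ∀ μ ∈ B.charpoly.roots, μ.re ≤ 0 := by
    intro μ hμ
    exact hA μ (Polynomial.isRoot_of_mem_roots (by rwa [hcp] at hμ))
  have hmonic := B.charpoly_monic
  have hsplits : Polynomial.Splits B.charpoly :=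
    IsAlgClosed.splits _
  have hfact : B.charpoly = (B.charpoly.roots.map (fun μ => X - Polynomial.C μ)).prod :=
    hsplits.eq_prod_roots_of_monic hmonic
  set r := B.charpoly.roots.toList with hrdef
  have hr : ∀ μ ∈ r, μ.re ≤ 0 := fun μ hμ =>
    hroots μ (by rwa [hrdef, Multiset.mem_toList] at hμ)
  have hCH : (r.map (fun μ => B - μ • 1)).prod = 0 := by
    have h1 : (r.map (fun μ => B - μ • 1)).prod = Polynomial.aeval B B.charpoly := by
      conv_rhs => rw [hfact, ← Multiset.coe_toList B.charpoly.roots]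
      rw [Multiset.map_coe, Multiset.prod_coe, map_list_prod, List.map_map]
      rw [hrdef]
      exact congrArg List.prod (List.map_congr_left fun μ _ => by
        simp [Algebra.algebraMap_eq_smul_one])
    rw [h1, Matrix.aeval_self_charpoly]
  obtain ⟨Γc, hc, hΓ⟩ := aux_key n B r hr 1 (by rw [hCH, zero_mul])
  refine ⟨Γc, fun t ht => ?_⟩
  have hsm : f (t • A) = t • B := by
    have h2 : f (t • A) = t • f A := map_smul f.toLinearMap t A
    rw [h2, hfA]
  have hmap : f (NormedSpace.exp (t • A)) = NormedSpace.exp (t • B) := by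
    rw [← hsm]
    exact NormedSpace.map_exp f hcont _
  have hnorm : ‖NormedSpace.exp (t • A)‖ = ‖f (NormedSpace.exp (t • A))‖ := by
    rw [hfdef, AlgHom.mapMatrix_apply]
    exact (Matrix.frobenius_norm_map_eq _ _ (fun a => Complex.norm_real a)).symm
  rw [hnorm, hmap]
  simpa using hΓ t ht
end

section
/- Marginal stability under the simple-imaginary-eigenvalue condition (Assumption 5): Let A₀ be an n × n real matrix such that every complex root λ of its characteristic polynomial satisfies either Re λ < 0, or Re λ = 0 and λ is a simple root (its root multiplicity in the complexified characteristic polynomial equals 1). Then the family t ↦ Matrix.exp(t • A₀) is bounded on t ≥ 0, i.e. there exists C such that ‖Matrix.exp(t • A₀)‖ ≤ C for all t ≥ 0. -/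
open Matrix Polynomial

attribute [local instance] Matrix.frobeniusNormedAddCommGroup Matrix.frobeniusNormedRing

set_option maxHeartbeats 2000000
set_option synthInstance.maxHeartbeats 400000

attribute [local instance] Matrix.frobeniusNormedSpace Matrix.frobeniusNormedAlgebra

section Aux

open Filter

private lemma bdd_of_tendsto {g : ℝ → ℝ} (hg : Continuous g)
    (h0 : Tendsto g atTop (nhds 0)) : ∃ C, ∀ t : ℝ, 0 ≤ t → g t ≤ C := by
  have h1 : ∀ᶠ t in atTop, g t ≤ 1 := h0.eventually (eventually_le_nhds one_pos)
  obtain ⟨T₀, hT₀⟩ := eventually_atTop.mp h1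
  obtain ⟨x₀, -, hx₀⟩ := isCompact_Icc.exists_isMaxOn (s := Set.Icc (0:ℝ) (max T₀ 0))
    ⟨0, by simp⟩ hg.continuousOn
  refine ⟨max (g x₀) 1, fun t ht => ?_⟩
  by_cases hle : t ≤ max T₀ 0
  · exact le_max_of_le_left (hx₀ ⟨ht, hle⟩)
  · exact le_max_of_le_right (hT₀ t ((le_max_left _ _).trans (le_of_not_ge hle)))

private lemma tendsto_pow_mul_exp_aux {c : ℝ} (hc : c < 0) (j : ℕ) :
    Tendsto (fun t : ℝ => t ^ j * Real.exp (c * t)) atTop (nhds 0) := by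
  have h2 : Tendsto (fun t : ℝ => -c * t) atTop atTop :=
    Tendsto.const_mul_atTop (by linarith) tendsto_id
  have h1 := (Real.tendsto_pow_mul_exp_neg_atTop_nhds_zero j).comp h2
  have h3 : Tendsto (fun t : ℝ => ((-c)^j)⁻¹ * ((-c*t)^j * Real.exp (-(-c*t)))) atTop
      (nhds (((-c)^j)⁻¹ * 0)) := h1.const_mul _
  rw [mul_zero] at h3
  refine h3.congr (fun t => ?_)
  have hcj : ((-c)^j) ≠ 0 := pow_ne_zero _ (by linarith)
  rw [mul_pow]
  have h4 : -(-c*t) = c * t := by ring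
  rw [h4]
  field_simp

end Aux

noncomputable def matToCLM (n : ℕ) :
    Matrix (Fin n) (Fin n) ℂ →ₐ[ℂ] ((Fin n → ℂ) →L[ℂ] (Fin n → ℂ)) where
  toFun M := LinearMap.toContinuousLinearMap M.mulVecLin
  map_one' := by
    ext v i
    simp only [LinearMap.coe_toContinuousLinearMap', Matrix.mulVecLin_apply,
      Matrix.one_mulVec, ContinuousLinearMap.one_apply]
  map_mul' M N := by
    ext v i
    simp only [LinearMap.coe_toContinuousLinearMap', Matrix.mulVecLin_apply,
      ContinuousLinearMap.mul_apply, ← Matrix.mulVec_mulVec]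
  map_zero' := by
    ext v i
    simp only [LinearMap.coe_toContinuousLinearMap', Matrix.mulVecLin_apply,
      Matrix.zero_mulVec, ContinuousLinearMap.zero_apply, Pi.zero_apply]
  map_add' M N := by
    ext v i
    simp only [LinearMap.coe_toContinuousLinearMap', Matrix.mulVecLin_apply,
      Matrix.add_mulVec, ContinuousLinearMap.add_apply, Pi.add_apply]
  commutes' c := by
    ext v i
    simp only [LinearMap.coe_toContinuousLinearMap', Matrix.mulVecLin_apply,
      Algebra.algebraMap_eq_smul_one, Matrix.smul_mulVec, Matrix.one_mulVec,
      ContinuousLinearMap.smul_apply, ContinuousLinearMap.one_apply, Pi.smul_apply,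
      smul_eq_mul]

lemma matToCLM_apply {n : ℕ} (M : Matrix (Fin n) (Fin n) ℂ) (v : Fin n → ℂ) :
    matToCLM n M v = M *ᵥ v := rfl

private lemma genEig_eq_eig_of_simple {V : Type*} [AddCommGroup V] [Module ℂ V]
    [FiniteDimensional ℂ V] (f : Module.End ℂ V) (μ : ℂ)
    (h1 : (LinearMap.charpoly f).rootMultiplicity μ = 1) {x : V}
    (hx : x ∈ f.maxGenEigenspace μ) : f x = μ • x := by
  classical
  obtain ⟨k, hk⟩ := (Module.End.mem_maxGenEigenspace f μ x).mp hx
  set g : Module.End ℂ V := f - μ • 1 with hg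
  set y := g x with hy
  suffices hy0 : y = 0 by
    have h : f x - μ • x = 0 := by
      simpa [hy, hg, LinearMap.sub_apply, LinearMap.smul_apply, Module.End.one_apply] using hy0
    exact sub_eq_zero.mp h
  by_contra hy0
  have hp0 : LinearMap.charpoly f ≠ 0 := (LinearMap.charpoly_monic f).ne_zero
  set q := LinearMap.charpoly f /ₘ (X - C μ) with hqdef
  have hqe : Polynomial.eval μ q ≠ 0 := by
    have h := Polynomial.eval_divByMonic_pow_rootMultiplicity_ne_zero μ hp0
    rwa [h1, pow_one] at h
  have hfac : (X - C μ) * q = LinearMap.charpoly f := by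
    have h := Polynomial.pow_mul_divByMonic_rootMultiplicity_eq (LinearMap.charpoly f) μ
    rwa [h1, pow_one] at h
  have haevalg : Polynomial.aeval f (X - C μ) = g := by
    rw [map_sub, Polynomial.aeval_X, Polynomial.aeval_C, hg,
      Module.algebraMap_end_eq_smul_id]
    rfl
  have hqy : (Polynomial.aeval f q) y = 0 := by
    have h2 : (Polynomial.aeval f q) * g = 0 := by
      rw [← haevalg, ← _root_.map_mul, mul_comm q, hfac, LinearMap.aeval_self_charpoly]
    have := congrArg (fun h : Module.End ℂ V => h x) h2
    simpa [Module.End.mul_apply, ← hy] using this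
  have hex : ∃ m, (g ^ m) y = 0 := by
    refine ⟨k, ?_⟩
    calc (g ^ k) y = (g ^ (k + 1)) x := by rw [hy, ← Module.End.mul_apply, ← pow_succ]
    _ = g ((g ^ k) x) := by rw [pow_succ', Module.End.mul_apply]
    _ = 0 := by rw [hk, map_zero]
  set m := Nat.find hex with hm
  have hmspec : (g ^ m) y = 0 := Nat.find_spec hex
  have hm0 : m ≠ 0 := by
    intro h
    apply hy0
    simpa [h] using hmspec
  set z := (g ^ (m - 1)) y with hz
  have hz0 : z ≠ 0 := Nat.find_min hex (Nat.sub_lt (Nat.pos_of_ne_zero hm0) one_pos)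
  have hgz : g z = 0 := by
    have hm1 : m - 1 + 1 = m := Nat.succ_pred_eq_of_pos (Nat.pos_of_ne_zero hm0)
    rw [hz, ← Module.End.mul_apply, ← pow_succ', hm1, hmspec]
  have heig : f z = μ • z := by
    have h : f z - μ • z = 0 := by
      simpa [hg, LinearMap.sub_apply, LinearMap.smul_apply, Module.End.one_apply] using hgz
    exact sub_eq_zero.mp h
  have h3 : (Polynomial.aeval f q) z = Polynomial.eval μ q • z :=
    Module.End.aeval_apply_of_hasEigenvector ⟨Module.End.mem_eigenspace_iff.mpr heig, hz0⟩
  have h4 : (Polynomial.aeval f q) z = 0 := by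
    have hcomm : (Polynomial.aeval f q) * g ^ (m - 1) = g ^ (m - 1) * Polynomial.aeval f q := by
      rw [← haevalg, ← _root_.map_pow, ← _root_.map_mul, ← _root_.map_mul, mul_comm]
    calc (Polynomial.aeval f q) z = ((Polynomial.aeval f q) * g ^ (m - 1)) y := by
          rw [Module.End.mul_apply, hz]
    _ = (g ^ (m - 1)) ((Polynomial.aeval f q) y) := by rw [hcomm, Module.End.mul_apply]
    _ = 0 := by rw [hqy, map_zero]
  have h5 : Polynomial.eval μ q • z = 0 := h3.symm.trans h4
  rcases smul_eq_zero.mp h5 with h | h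
  · exact hqe h
  · exact hz0 h

private lemma clm_algebraMap_apply {n : ℕ} (c : ℂ) (v : Fin n → ℂ) :
    (algebraMap ℂ ((Fin n → ℂ) →L[ℂ] Fin n → ℂ) c) v = c • v := rfl

private lemma exp_apply_genEig {n : ℕ} (T : (Fin n → ℂ) →L[ℂ] (Fin n → ℂ)) (μ : ℂ)
    (x : Fin n → ℂ) (k : ℕ) (hx : ((T - μ • 1) ^ k) x = 0) (t : ℝ) :
    NormedSpace.exp ((t : ℂ) • T) x =
      Complex.exp ((t : ℂ) * μ) • ∑ j ∈ Finset.range k,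
        ((t : ℂ) ^ j * ((j : ℕ).factorial : ℂ)⁻¹) • (((T - μ • 1) ^ j) x) := by
  let _ : NormedAlgebra ℚ ((Fin n → ℂ) →L[ℂ] (Fin n → ℂ)) := .restrictScalars ℚ ℂ _
  set N := T - μ • 1 with hN
  have hsplit : (t : ℂ) • T
      = algebraMap ℂ ((Fin n → ℂ) →L[ℂ] Fin n → ℂ) ((t : ℂ) * μ) + (t : ℂ) • N := by
    ext v i
    have h1 : N v = T v - μ • v := by
      rw [hN, ContinuousLinearMap.sub_apply, ContinuousLinearMap.smul_apply,
        ContinuousLinearMap.one_apply]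
    have h2 : ((t : ℂ) • T) v = (t : ℂ) • T v := rfl
    rw [ContinuousLinearMap.add_apply, clm_algebraMap_apply, h2,
      ContinuousLinearMap.smul_apply, h1, smul_sub, smul_smul]
    simp only [Pi.add_apply, Pi.smul_apply, Pi.sub_apply, smul_eq_mul]
    ring
  have hcomm : Commute (algebraMap ℂ ((Fin n → ℂ) →L[ℂ] Fin n → ℂ) ((t : ℂ) * μ)) ((t : ℂ) • N) :=
    Algebra.commute_algebraMap_left _ _
  rw [hsplit, NormedSpace.exp_add_of_commute hcomm, ← NormedSpace.algebraMap_exp_comm,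
    ContinuousLinearMap.mul_apply, clm_algebraMap_apply, ← Complex.exp_eq_exp_ℂ]
  congr 1
  have hterm : ∀ j : ℕ, (((j : ℕ).factorial : ℂ)⁻¹ • ((t : ℂ) • N) ^ j) x
      = ((t : ℂ) ^ j * ((j : ℕ).factorial : ℂ)⁻¹) • ((N ^ j) x) := by
    intro j
    have hp : ((t : ℂ) • N) ^ j = (t : ℂ) ^ j • N ^ j := by
      induction j with
      | zero => simp
      | succ m ih =>
        rw [pow_succ, pow_succ, ih]
        ext v
        simp only [ContinuousLinearMap.mul_apply, ContinuousLinearMap.smul_apply]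
        rw [(N ^ m).map_smul, smul_smul, pow_succ, ContinuousLinearMap.mul_apply]
    rw [hp, smul_smul, ContinuousLinearMap.smul_apply, mul_comm]
  have hsummable : Summable (fun j : ℕ => (((j : ℕ).factorial : ℂ)⁻¹ • ((t : ℂ) • N) ^ j)) :=
    NormedSpace.expSeries_summable' ((t : ℂ) • N)
  have happ : NormedSpace.exp ((t : ℂ) • N) x
      = ∑' j : ℕ, ((((j : ℕ).factorial : ℂ)⁻¹ • ((t : ℂ) • N) ^ j)) x := by
    rw [NormedSpace.exp_eq_tsum ℂ]
    simpa using (ContinuousLinearMap.apply ℂ (Fin n → ℂ) x).map_tsum hsummable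
  rw [happ]
  have hvanish : ∀ j ∉ Finset.range k, ((((j : ℕ).factorial : ℂ)⁻¹ • ((t : ℂ) • N) ^ j)) x = 0 := by
    intro j hj
    have hjk : k ≤ j := by simpa using hj
    have hNj : (N ^ j) x = 0 := by
      have hsplit2 : N ^ j = N ^ (j - k) * N ^ k := by
        rw [← pow_add]
        congr 1
        omega
      rw [hsplit2, ContinuousLinearMap.mul_apply, hx, map_zero]
    rw [hterm j, hNj, smul_zero]
  rw [tsum_eq_sum hvanish]
  exact Finset.sum_congr rfl fun j _ => hterm j

/-- Marginal stability under the simple-imaginary-eigenvalue condition: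
if every eigenvalue of `A₀` has negative real part, or zero real part and is a
simple root of the characteristic polynomial, then `t ↦ exp (t • A₀)` is bounded
on `t ≥ 0`. -/
theorem matrix_exp_bounded_of_marginally_stable
    (n : ℕ) (A₀ : Matrix (Fin n) (Fin n) ℝ)
    (hA₀ : ∀ lam : ℂ, (A₀.charpoly.map (algebraMap ℝ ℂ)).IsRoot lam →
      lam.re < 0 ∨
        (lam.re = 0 ∧ (A₀.charpoly.map (algebraMap ℝ ℂ)).rootMultiplicity lam = 1)) :
    ∃ C : ℝ, ∀ t : ℝ, 0 ≤ t → ‖NormedSpace.exp (t • A₀)‖ ≤ C := by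
  classical
  set M : Matrix (Fin n) (Fin n) ℂ := A₀.map (algebraMap ℝ ℂ) with hM
  set T : (Fin n → ℂ) →L[ℂ] (Fin n → ℂ) := matToCLM n M with hT
  set f : Module.End ℂ (Fin n → ℂ) := Matrix.mulVecLin M with hf
  have hΦcont : Continuous (matToCLM n) :=
    LinearMap.continuous_of_finiteDimensional (matToCLM n).toLinearMap
  -- characteristic polynomial of f
  have hcharpoly : LinearMap.charpoly f = A₀.charpoly.map (algebraMap ℝ ℂ) := by
    rw [← Matrix.charpoly_map A₀ (algebraMap ℝ ℂ), ← hM,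
      ← LinearMap.charpoly_toMatrix f (Pi.basisFun ℂ (Fin n)),
      LinearMap.toMatrix_eq_toMatrix', hf, ← Matrix.toLin'_apply',
      LinearMap.toMatrix'_toLin']
  -- powers of T and of f agree pointwise
  have hcoe_pow : ∀ (μ : ℂ) (k : ℕ) (x : Fin n → ℂ),
      ((T - μ • 1) ^ k) x = ((f - μ • 1) ^ k) x := by
    intro μ k x
    have hfun : ⇑(T - μ • 1) = ⇑(f - μ • (1 : Module.End ℂ (Fin n → ℂ))) := by
      funext v
      rw [ContinuousLinearMap.sub_apply, ContinuousLinearMap.smul_apply,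
        ContinuousLinearMap.one_apply, LinearMap.sub_apply, LinearMap.smul_apply,
        Module.End.one_apply]
      rfl
    rw [show ((T - μ • 1) ^ k) x = (⇑(T - μ • 1))^[k] x from
        congrFun (FunLike.coe_pow_eq_iterate _ k) x, hfun, ← Module.End.pow_apply]
  -- Frobenius norm is controlled by the operator norm
  have hfro : ∀ X : Matrix (Fin n) (Fin n) ℂ, ‖X‖ ≤ n * ‖matToCLM n X‖ := by
    intro X
    have hentry : ∀ i j, ‖X i j‖ ≤ ‖matToCLM n X‖ := by
      intro i j
      set y : Fin n → ℂ := matToCLM n X (Pi.single j (1 : ℂ)) with hy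
      have h1 : y = fun i' => X i' j := by
        rw [hy, matToCLM_apply, Matrix.mulVec_single_one]
        rfl
      have h2 : ‖y i‖ ≤ ‖y‖ := norm_le_pi_norm y i
      calc ‖X i j‖ = ‖y i‖ := by rw [h1]
      _ ≤ ‖y‖ := h2
      _ ≤ ‖matToCLM n X‖ * ‖(Pi.single j (1 : ℂ) : Fin n → ℂ)‖ := (matToCLM n X).le_opNorm _
      _ = ‖matToCLM n X‖ := by rw [Pi.norm_single, norm_one, mul_one]
    have hsum : (∑ i, ∑ j, ‖X i j‖ ^ (2 : ℝ)) ≤ ((n : ℝ) * ‖matToCLM n X‖) ^ 2 := by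
      calc (∑ i, ∑ j, ‖X i j‖ ^ (2 : ℝ))
          ≤ ∑ _i : Fin n, ∑ _j : Fin n, ‖matToCLM n X‖ ^ 2 := by
            refine Finset.sum_le_sum fun i _ => Finset.sum_le_sum fun j _ => ?_
            rw [show ((2 : ℝ)) = ((2 : ℕ) : ℝ) by norm_num, Real.rpow_natCast]
            exact pow_le_pow_left₀ (norm_nonneg _) (hentry i j) 2
      _ = ((n : ℝ) * ‖matToCLM n X‖) ^ 2 := by
            simp only [Finset.sum_const, Finset.card_univ, Fintype.card_fin, nsmul_eq_mul]
            ring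
    calc ‖X‖ = (∑ i, ∑ j, ‖X i j‖ ^ (2 : ℝ)) ^ (1 / 2 : ℝ) := Matrix.frobenius_norm_def X
      _ = Real.sqrt (∑ i, ∑ j, ‖X i j‖ ^ (2 : ℝ)) := (Real.sqrt_eq_rpow _).symm
      _ ≤ Real.sqrt (((n : ℝ) * ‖matToCLM n X‖) ^ 2) := Real.sqrt_le_sqrt hsum
      _ = (n : ℝ) * ‖matToCLM n X‖ := Real.sqrt_sq (by positivity)
  -- pointwise boundedness
  have hpt : ∀ x : Fin n → ℂ, ∃ C, ∀ t : ℝ, 0 ≤ t →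
      ‖NormedSpace.exp ((t : ℂ) • T) x‖ ≤ C := by
    set P : Submodule ℂ (Fin n → ℂ) :=
      { carrier := {x | ∃ C, ∀ t : ℝ, 0 ≤ t → ‖NormedSpace.exp ((t : ℂ) • T) x‖ ≤ C}
        add_mem' := by
          rintro a b ⟨C₁, h₁⟩ ⟨C₂, h₂⟩
          refine ⟨C₁ + C₂, fun t ht => ?_⟩
          rw [map_add]
          exact (norm_add_le _ _).trans (add_le_add (h₁ t ht) (h₂ t ht))
        zero_mem' := ⟨0, fun t ht => by simp⟩
        smul_mem' := by
          rintro c a ⟨C, h⟩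
          refine ⟨‖c‖ * C, fun t ht => ?_⟩
          rw [ContinuousLinearMap.map_smul, norm_smul]
          exact mul_le_mul_of_nonneg_left (h t ht) (norm_nonneg c) } with hP
    have hcase : ∀ μ : ℂ, (Module.End.maxGenEigenspace f μ) ≤ P := by
      intro μ x hx
      obtain ⟨k, hk⟩ := (Module.End.mem_maxGenEigenspace f μ x).mp hx
      by_cases hx0 : x = 0
      · rw [hx0]; exact P.zero_mem
      have hk0 : k ≠ 0 := by
        intro h
        apply hx0
        simpa [h] using hk
      have heigval : Module.End.HasEigenvalue f μ := by
        refine Module.End.hasEigenvalue_of_hasGenEigenvalue (k := k) ?_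
        rw [Module.End.hasGenEigenvalue_iff]
        intro hbot
        apply hx0
        have hmemg : x ∈ f.genEigenspace μ (k : ℕ) := Module.End.mem_genEigenspace_nat.mpr hk
        rw [hbot] at hmemg
        simpa using hmemg
      have hroot : (A₀.charpoly.map (algebraMap ℝ ℂ)).IsRoot μ := by
        have h1 : (minpoly ℂ f).IsRoot μ := Module.End.isRoot_of_hasEigenvalue heigval
        obtain ⟨r, hr⟩ := LinearMap.minpoly_dvd_charpoly f
        rw [← hcharpoly]
        show Polynomial.eval μ (LinearMap.charpoly f) = 0
        rw [hr, Polynomial.eval_mul, h1, zero_mul]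
      have hkC : ((T - μ • 1) ^ k) x = 0 := by rw [hcoe_pow]; exact hk
      rcases hA₀ μ hroot with hneg | ⟨hre, hmult⟩
      · -- strictly stable eigenvalue
        set b : ℕ → ℝ := fun j => ((j : ℕ).factorial : ℝ)⁻¹ * ‖((T - μ • 1) ^ j) x‖ with hb
        set g : ℝ → ℝ := fun t => Real.exp (μ.re * t) * ∑ j ∈ Finset.range k, b j * t ^ j
          with hgdef
        have hgc : Continuous g := by
          refine Continuous.mul ?_ ?_
          · exact Real.continuous_exp.comp (continuous_const.mul continuous_id)
          · exact continuous_finset_sum _ fun j _ => continuous_const.mul (continuous_pow j)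
        have hg0 : Filter.Tendsto g Filter.atTop (nhds 0) := by
          have h1 : Filter.Tendsto
              (fun t : ℝ => ∑ j ∈ Finset.range k, b j * (t ^ j * Real.exp (μ.re * t)))
              Filter.atTop (nhds (∑ j ∈ Finset.range k, b j * 0)) :=
            tendsto_finset_sum _ fun j _ => (tendsto_pow_mul_exp_aux hneg j).const_mul (b j)
          simp only [mul_zero, Finset.sum_const_zero] at h1
          refine h1.congr fun t => ?_
          calc ∑ j ∈ Finset.range k, b j * (t ^ j * Real.exp (μ.re * t))
              = ∑ j ∈ Finset.range k, (b j * t ^ j) * Real.exp (μ.re * t) :=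
                Finset.sum_congr rfl fun j _ => by ring
            _ = (∑ j ∈ Finset.range k, b j * t ^ j) * Real.exp (μ.re * t) :=
                (Finset.sum_mul _ _ _).symm
            _ = g t := by rw [hgdef]; ring
        obtain ⟨C, hC⟩ := bdd_of_tendsto hgc hg0
        refine ⟨C, fun t ht => ?_⟩
        rw [exp_apply_genEig T μ x k hkC t]
        have hnorm1 : ‖Complex.exp ((t : ℂ) * μ)‖ = Real.exp (μ.re * t) := by
          rw [Complex.norm_exp]
          congr 1
          simp [Complex.mul_re]
          ring
        rw [norm_smul, hnorm1]
        have hsub : ‖∑ j ∈ Finset.range k,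
              ((t : ℂ) ^ j * ((j : ℕ).factorial : ℂ)⁻¹) • (((T - μ • 1) ^ j) x)‖
            ≤ ∑ j ∈ Finset.range k, b j * t ^ j := by
          refine (norm_sum_le _ _).trans (Finset.sum_le_sum fun j _ => ?_)
          rw [norm_smul, norm_mul, norm_pow, Complex.norm_real, Real.norm_eq_abs,
            abs_of_nonneg ht, norm_inv, Complex.norm_natCast, hb]
          ring_nf
          exact le_refl _
        calc Real.exp (μ.re * t) * ‖∑ j ∈ Finset.range k,
              ((t : ℂ) ^ j * ((j : ℕ).factorial : ℂ)⁻¹) • (((T - μ • 1) ^ j) x)‖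
            ≤ Real.exp (μ.re * t) * ∑ j ∈ Finset.range k, b j * t ^ j :=
              mul_le_mul_of_nonneg_left hsub (Real.exp_nonneg _)
          _ = g t := rfl
          _ ≤ C := hC t ht
      · -- simple purely imaginary eigenvalue
        have hsim : f x = μ • x :=
          genEig_eq_eig_of_simple f μ (by rw [hcharpoly]; exact hmult) hx
        have hkC1 : ((T - μ • (1 : (Fin n → ℂ) →L[ℂ] (Fin n → ℂ))) ^ 1) x = 0 := by
          rw [hcoe_pow, pow_one, LinearMap.sub_apply, LinearMap.smul_apply,
            Module.End.one_apply, hsim, sub_self]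
        refine ⟨‖x‖, fun t ht => ?_⟩
        rw [exp_apply_genEig T μ x 1 hkC1 t, norm_smul]
        have h2 : ‖Complex.exp ((t : ℂ) * μ)‖ = 1 := by
          rw [Complex.norm_exp]
          simp [Complex.mul_re, hre]
        have h3 : (∑ j ∈ Finset.range 1,
            ((t : ℂ) ^ j * ((j : ℕ).factorial : ℂ)⁻¹) • (((T - μ • 1) ^ j) x)) = x := by
          simp
        rw [h2, one_mul, h3]
    intro x
    have hx : x ∈ (⊤ : Submodule ℂ (Fin n → ℂ)) := trivial
    rw [← Module.End.iSup_maxGenEigenspace_eq_top f] at hx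
    exact (iSup_le hcase : _ ≤ P) hx
  -- Banach–Steinhaus
  obtain ⟨C', hC'⟩ := banach_steinhaus
    (g := fun i : {t : ℝ // 0 ≤ t} => NormedSpace.exp (((i : ℝ) : ℂ) • T))
    (fun x => by
      obtain ⟨C, hC⟩ := hpt x
      exact ⟨C, fun i => hC i i.2⟩)
  refine ⟨n * C', fun t ht => ?_⟩
  -- transfer the bound back to the real matrix exponential
  have hψcont : Continuous (AlgHom.mapMatrix (Algebra.ofId ℝ ℂ) :
      Matrix (Fin n) (Fin n) ℝ →ₐ[ℝ] Matrix (Fin n) (Fin n) ℂ) :=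
    LinearMap.continuous_of_finiteDimensional
      (AlgHom.mapMatrix (Algebra.ofId ℝ ℂ) :
        Matrix (Fin n) (Fin n) ℝ →ₐ[ℝ] Matrix (Fin n) (Fin n) ℂ).toLinearMap
  have hmapexp : (NormedSpace.exp (t • A₀)).map (algebraMap ℝ ℂ)
      = NormedSpace.exp ((t : ℂ) • M) := by
    have h1 := NormedSpace.map_exp (AlgHom.mapMatrix (Algebra.ofId ℝ ℂ) :
      Matrix (Fin n) (Fin n) ℝ →ₐ[ℝ] Matrix (Fin n) (Fin n) ℂ) hψcont (t • A₀)
    have h2 : (AlgHom.mapMatrix (Algebra.ofId ℝ ℂ)) (t • A₀) = (t : ℂ) • M := by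
      rw [_root_.map_smul, AlgHom.mapMatrix_apply]
      show t • (A₀.map (Algebra.ofId ℝ ℂ)) = (t : ℂ) • M
      rw [show (A₀.map (Algebra.ofId ℝ ℂ)) = M from rfl]
      rw [show ((t : ℂ)) = algebraMap ℝ ℂ t from rfl, algebraMap_smul]
    rw [AlgHom.mapMatrix_apply] at h1
    rw [show (NormedSpace.exp (t • A₀)).map (algebraMap ℝ ℂ)
        = (NormedSpace.exp (t • A₀)).map (Algebra.ofId ℝ ℂ) from rfl]
    exact h1.trans (congrArg NormedSpace.exp h2)
  have hnormmap : ‖NormedSpace.exp (t • A₀)‖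
      = ‖(NormedSpace.exp (t • A₀)).map (algebraMap ℝ ℂ)‖ :=
    (Matrix.frobenius_norm_map_eq _ _ fun a => Complex.norm_real a).symm
  have hcommexp : matToCLM n (NormedSpace.exp ((t : ℂ) • M))
      = NormedSpace.exp ((t : ℂ) • T) := by
    exact (NormedSpace.map_exp (matToCLM n) hΦcont _).trans (by rw [_root_.map_smul, hT])
  calc ‖NormedSpace.exp (t • A₀)‖
      = ‖NormedSpace.exp ((t : ℂ) • M)‖ := by rw [hnormmap, hmapexp]
    _ ≤ n * ‖matToCLM n (NormedSpace.exp ((t : ℂ) • M))‖ := hfro _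
    _ = n * ‖NormedSpace.exp ((t : ℂ) • T)‖ := by rw [hcommexp]
    _ ≤ n * C' := by
        have h := hC' ⟨t, ht⟩
        exact mul_le_mul_of_nonneg_left h (by positivity)
end

section
/- Transformed error dynamics for heterogeneous agents under output regulation (Eq. (13)): Let A be n × n, B be n × p, A₀ be m × m, X be n × m, U be p × m, K¹ be p × n real matrices with the regulation identity X * A₀ = A * X + B * U, and set K² = U − K¹ * X. Let x : ℝ → (Fin n → ℝ), x₀, ξ : ℝ → (Fin m → ℝ), v : ℝ → (Fin n → ℝ), τ : ℝ → ℝ, and define u(s) = K¹.mulVec (x s) + K².mulVec (ξ s). Fix t ∈ ℝ and suppose HasDerivAt x (A.mulVec (x t) + B.mulVec (u (t − τ t)) + v t) t and HasDerivAt x₀ (A₀.mulVec (x₀ t)) t. Then x̄ = x − X.mulVec ∘ x₀ satisfies HasDerivAt x̄ (A.mulVec (x̄ t) + (B * K¹).mulVec (x̄ (t − τ t)) + v t + (B * K²).mulVec (ξ (t − τ t) − x₀ (t − τ t)) − (B * U).mulVec (x₀ t − x₀ (t − τ t))) t. -/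
open Matrix

/-- Transformed error dynamics for heterogeneous agents under output
regulation (Eq. (13)). -/
theorem transformed_error_dynamics_heterogeneous
    (n p m : ℕ)
    (A : Matrix (Fin n) (Fin n) ℝ) (B : Matrix (Fin n) (Fin p) ℝ)
    (A₀ : Matrix (Fin m) (Fin m) ℝ) (X : Matrix (Fin n) (Fin m) ℝ)
    (U : Matrix (Fin p) (Fin m) ℝ) (K₁ : Matrix (Fin p) (Fin n) ℝ)
    (hreg : X * A₀ = A * X + B * U)
    (K₂ : Matrix (Fin p) (Fin m) ℝ) (hK₂ : K₂ = U - K₁ * X)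
    (x : ℝ → (Fin n → ℝ)) (x₀ ξ : ℝ → (Fin m → ℝ)) (v : ℝ → (Fin n → ℝ))
    (τ : ℝ → ℝ)
    (u : ℝ → (Fin p → ℝ))
    (hu : ∀ s : ℝ, u s = K₁.mulVec (x s) + K₂.mulVec (ξ s))
    (t : ℝ)
    (hx : HasDerivAt x (A.mulVec (x t) + B.mulVec (u (t - τ t)) + v t) t)
    (hx₀ : HasDerivAt x₀ (A₀.mulVec (x₀ t)) t) :
    HasDerivAt (fun s => x s - X.mulVec (x₀ s))
      (A.mulVec (x t - X.mulVec (x₀ t))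
        + (B * K₁).mulVec (x (t - τ t) - X.mulVec (x₀ (t - τ t)))
        + v t
        + (B * K₂).mulVec (ξ (t - τ t) - x₀ (t - τ t))
        - (B * U).mulVec (x₀ t - x₀ (t - τ t))) t := by
  have hX : HasDerivAt (fun s => X.mulVec (x₀ s)) (X.mulVec (A₀.mulVec (x₀ t))) t := by
    have := ((Matrix.mulVecLin X).toContinuousLinearMap).hasFDerivAt.comp_hasDerivAt t hx₀
    simpa [Function.comp_def, Matrix.mulVecLin_apply] using this
  have h := hx.sub hX
  refine h.congr_deriv ?_
  have h1 : X.mulVec (A₀.mulVec (x₀ t)) = (X * A₀).mulVec (x₀ t) :=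
    Matrix.mulVec_mulVec _ _ _
  rw [hu, hK₂, h1, hreg]
  simp only [Matrix.mulVec_add, Matrix.mulVec_sub, Matrix.sub_mulVec,
    Matrix.add_mulVec, ← Matrix.mulVec_mulVec]
  abel
end

section
/- Change of variables for the communication-delay-related observer (Appendix A): Let A be an n × n real matrix, ε > 0, let J be a finite index set of neighbors of agent i, with nonnegative weights a : J → ℝ and delays τ : J → ℝ with τ j ≥ 0, let ξᵢ : ℝ → (Fin n → ℝ) and ξ : J → ℝ → (Fin n → ℝ) (where for the leader index the function is the leader state x₀ satisfying its own dynamics). Fix t ∈ ℝ and suppose HasDerivAt ξᵢ (A.mulVec (ξᵢ t) + ε • ∑ j ∈ J, a j • ((Matrix.exp ((τ j) • A)).mulVec (ξ j (t − τ j)) − ξᵢ t)) t. Define w : ℝ → (Fin n → ℝ) by w(s) = (Matrix.exp (−s • A)).mulVec (ξᵢ s) and wⱼ(s) = (Matrix.exp (−s • A)).mulVec (ξ j s). Then HasDerivAt w (ε • ∑ j ∈ J, a j • (wⱼ (t − τ j) − w t)) t. -/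
open Matrix Finset

/-- Change of variables for the communication-delay-related observer
(Appendix A): in the variables `w s = exp (-s • A) *ᵥ ξᵢ s`,
`wⱼ s = exp (-s • A) *ᵥ ξ j s`, the observer dynamics become the delayed
consensus dynamics `w' = ε • ∑ j, a j • (wⱼ (t - τ j) - w t)`. -/
theorem observer_change_of_variables
    (n : ℕ) (A : Matrix (Fin n) (Fin n) ℝ) (ε : ℝ) (hε : 0 < ε)
    (J : Type*) [Fintype J]
    (a : J → ℝ) (ha : ∀ j, 0 ≤ a j)
    (τ : J → ℝ) (hτ : ∀ j, 0 ≤ τ j)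
    (ξi : ℝ → (Fin n → ℝ)) (ξ : J → ℝ → (Fin n → ℝ))
    (t : ℝ)
    (hderiv : HasDerivAt ξi
      (A.mulVec (ξi t) +
        ε • ∑ j, a j •
          ((NormedSpace.exp ((τ j) • A)).mulVec (ξ j (t - τ j)) - ξi t)) t) :
    HasDerivAt (fun s => (NormedSpace.exp ((-s) • A)).mulVec (ξi s))
      (ε • ∑ j, a j •
        ((NormedSpace.exp ((-(t - τ j)) • A)).mulVec (ξ j (t - τ j)) -
          (NormedSpace.exp ((-t) • A)).mulVec (ξi t))) t := by
  letI : SeminormedRing (Matrix (Fin n) (Fin n) ℝ) := Matrix.linftyOpSemiNormedRing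
  letI : NormedRing (Matrix (Fin n) (Fin n) ℝ) := Matrix.linftyOpNormedRing
  letI : NormedAlgebra ℝ (Matrix (Fin n) (Fin n) ℝ) := Matrix.linftyOpNormedAlgebra
  -- the bilinear map (M, v) ↦ M *ᵥ v as a continuous linear map
  let L : Matrix (Fin n) (Fin n) ℝ →L[ℝ] ((Fin n → ℝ) →L[ℝ] (Fin n → ℝ)) :=
    LinearMap.toContinuousLinearMap
      { toFun := fun M => LinearMap.toContinuousLinearMap M.mulVecLin
        map_add' := by
          intro M N; ext v i; simp [Matrix.add_mulVec]
        map_smul' := by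
          intro c M; ext v i; simp [Matrix.smul_mulVec] }
  have hL : ∀ (M : Matrix (Fin n) (Fin n) ℝ) (v : Fin n → ℝ), L M v = M.mulVec v := by
    intro M v; simp [L]
  have hE : HasDerivAt (fun s : ℝ => NormedSpace.exp ((-s) • A))
      (-(NormedSpace.exp ((-t) • A) * A)) t := by
    have h1 := hasDerivAt_exp_smul_const (𝕂 := ℝ) A (-t)
    have h2 : HasDerivAt (fun s : ℝ => -s) (-1 : ℝ) t := by
      exact (hasDerivAt_id' (x := t)).neg
    have h3 := h1.scomp t h2
    simp only [Function.comp_def, neg_smul, one_smul] at h3 ⊢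
    exact h3
  have hc : HasDerivAt (fun s : ℝ => L (NormedSpace.exp ((-s) • A))) (L (-(NormedSpace.exp ((-t) • A) * A))) t :=
    L.hasFDerivAt.comp_hasDerivAt t hE
  have key := hc.clm_apply hderiv
  have hexp : ∀ j, NormedSpace.exp ((-t) • A) * NormedSpace.exp ((τ j) • A)
      = NormedSpace.exp ((-(t - τ j)) • A) := by
    intro j
    rw [← Matrix.exp_add_of_commute]
    · congr 1
      rw [← add_smul]; ring_nf
    · exact ((Commute.refl A).smul_left (-t)).smul_right (τ j)
  have heq : L (-(NormedSpace.exp ((-t) • A) * A)) (ξi t) +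
      L (NormedSpace.exp ((-t) • A)) (A.mulVec (ξi t) +
        ε • ∑ j, a j •
          ((NormedSpace.exp ((τ j) • A)).mulVec (ξ j (t - τ j)) - ξi t))
      = ε • ∑ j, a j •
        ((NormedSpace.exp ((-(t - τ j)) • A)).mulVec (ξ j (t - τ j)) -
          (NormedSpace.exp ((-t) • A)).mulVec (ξi t)) := by
    simp only [hL]
    rw [Matrix.mulVec_add, Matrix.neg_mulVec, ← Matrix.mulVec_mulVec]
    rw [neg_add_cancel_left]
    rw [Matrix.mulVec_smul]
    congr 1
    simp only [← Matrix.mulVecLin_apply, map_sum]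
    refine Finset.sum_congr rfl fun j _ => ?_
    simp only [Matrix.mulVecLin_apply, Matrix.mulVec_smul, Matrix.mulVec_sub,
      Matrix.mulVec_mulVec, hexp j]
  have key' : HasDerivAt (fun s : ℝ => L (NormedSpace.exp ((-s) • A)) (ξi s))
      (ε • ∑ j, a j •
        ((NormedSpace.exp ((-(t - τ j)) • A)).mulVec (ξ j (t - τ j)) -
          (NormedSpace.exp ((-t) • A)).mulVec (ξi t))) t := heq ▸ key
  simpa only [hL] using key'
end
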